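/- For a product state ρ = ρ_A⊗ρ_B, the CCNR correlation matrix C and the ESIC correlation matrix P_s satisfy ‖C‖_tr ≤ ‖P_s‖_tr. Specifically, ‖C‖_tr = √(tr(ρ_A²)tr(ρ_B²)) and ‖P_s‖_tr = √((1+tr(ρ_A²))(1+tr(ρ_B²)))/2, and √(xy) ≤ ½√((1+x)(1+y)) for 0 ≤ x,y ≤ 1. -/

import Mathlib

open Matrix BigOperators
open scoped Kronecker ComplexOrder

/-- Trace norm (sum of singular values) of a real matrix. -/
noncomputable def traceNorm {m n : Type*} [Fintype m] [Fintype n] [DecidableEq m]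
    (M : Matrix m n ℝ) : ℝ :=
  ((Matrix.posSemidef_self_mul_conjTranspose M).1.eigenvectorUnitary.1 *
    diagonal (Real.sqrt ∘ (Matrix.posSemidef_self_mul_conjTranspose M).1.eigenvalues) *
    (star (Matrix.posSemidef_self_mul_conjTranspose M).1.eigenvectorUnitary : Matrix m m ℝ)).trace

/-- The SIC overlap condition for a family of `d²` vectors in `ℂ^d`. -/
def IsSIC (d : ℕ) (ψ : Fin (d ^ 2) → Fin d → ℂ) : Prop :=
  ∀ i j, ‖dotProduct (star (ψ i)) (ψ j)‖ ^ 2 =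
    ((if i = j then (d : ℝ) else 0) + 1) / ((d : ℝ) + 1)

/-- The SIC POVM element `Π_k = |ψ_k⟩⟨ψ_k| / d`. -/
noncomputable def sicProj (d : ℕ) (ψ : Fin (d ^ 2) → Fin d → ℂ) (k : Fin (d ^ 2)) :
    Matrix (Fin d) (Fin d) ℂ :=
  (d : ℂ)⁻¹ • vecMulVec (ψ k) (star (ψ k))
section Aux

open scoped MatrixOrder in
lemma traceNorm_eq_of_sq {m n : Type*} [Fintype m] [Fintype n] [DecidableEq m]
    (M : Matrix m n ℝ) (S : Matrix m m ℝ) (hS : S.PosSemidef) (h : S ^ 2 = M * Mᴴ) :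
    traceNorm M = S.trace := by
  have hH := Matrix.posSemidef_self_mul_conjTranspose M
  have e : CFC.sqrt (M * Mᴴ) = S := CFC.sqrt_unique (by rw [← sq]; exact h) hS.nonneg
  rw [CFC.sqrt_eq_real_sqrt _ hH.nonneg, cfcₙ_eq_cfc, hH.1.cfc_eq, IsHermitian.cfc,
    Unitary.conjStarAlgAut_apply] at e
  rw [traceNorm, ← e]
  simp [RCLike.ofReal_real_eq_id]

lemma psd_smul_vecMulVec {m : Type*} [Fintype m] (a : m → ℝ) (r : ℝ) (hr : 0 ≤ r) :
    PosSemidef (r • vecMulVec a a) := by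
  rw [posSemidef_iff_dotProduct_mulVec]
  constructor
  · ext i j
    simp [conjTranspose_apply, vecMulVec_apply, mul_comm]
  · intro x
    have : star x ⬝ᵥ (r • vecMulVec a a) *ᵥ x = r * (∑ i, a i * x i) ^ 2 := by
      simp only [star_trivial, dotProduct, mulVec, vecMulVec_apply, Matrix.smul_apply, smul_eq_mul,
        pow_two, Finset.sum_mul_sum, Finset.mul_sum]
      refine Finset.sum_congr rfl fun i _ => ?_
      calc ∑ j, x i * (r * (a i * a j) * x j)
          = ∑ j, (x i * r * a i) * (a j * x j) :=
            Finset.sum_congr rfl fun j _ => by ring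
        _ = (x i * r * a i) * ∑ j, (a j * x j) := (Finset.mul_sum _ _ _).symm
        _ = r * ((∑ j, a j * x j) * (a i * x i)) := by ring
    rw [this]
    positivity

lemma traceNorm_rankOne {m n : Type*} [Fintype m] [Fintype n] [DecidableEq m]
    (a : m → ℝ) (b : n → ℝ) (M : Matrix m n ℝ) (hM : ∀ i j, M i j = a i * b j) :
    traceNorm M = Real.sqrt (∑ i, a i ^ 2) * Real.sqrt (∑ j, b j ^ 2) := by
  set s := ∑ i, a i ^ 2 with hs_def
  set t := ∑ j, b j ^ 2 with ht_def
  have hs0 : 0 ≤ s := Finset.sum_nonneg fun i _ => sq_nonneg _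
  have ht0 : 0 ≤ t := Finset.sum_nonneg fun j _ => sq_nonneg _
  have hzero : M = 0 → traceNorm M = 0 := by
    intro h
    have h0 : (0 : Matrix m m ℝ).PosSemidef := PosSemidef.zero
    rw [traceNorm_eq_of_sq M 0 h0 (by simp [h, pow_two]), trace_zero]
  by_cases hs : s = 0
  · have ha : ∀ i, a i = 0 := by
      intro i
      have h2 := (Finset.sum_eq_zero_iff_of_nonneg (fun i (_ : i ∈ Finset.univ) => sq_nonneg (a i))).mp hs i (Finset.mem_univ i)
      exact (pow_eq_zero_iff two_ne_zero).mp h2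
    rw [hzero (by ext i j; simp [hM, ha]), hs, Real.sqrt_zero, zero_mul]
  by_cases ht : t = 0
  · have hb : ∀ j, b j = 0 := by
      intro j
      have h2 := (Finset.sum_eq_zero_iff_of_nonneg (fun j (_ : j ∈ Finset.univ) => sq_nonneg (b j))).mp ht j (Finset.mem_univ j)
      exact (pow_eq_zero_iff two_ne_zero).mp h2
    rw [hzero (by ext i j; simp [hM, hb]), ht, Real.sqrt_zero, mul_zero]
  -- main case
  have hss : Real.sqrt s ≠ 0 := by
    rw [Real.sqrt_ne_zero' ]; exact lt_of_le_of_ne hs0 (Ne.symm hs)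
  set r := Real.sqrt t / Real.sqrt s with hr_def
  have hr0 : 0 ≤ r := div_nonneg (Real.sqrt_nonneg _) (Real.sqrt_nonneg _)
  have hS : PosSemidef (r • vecMulVec a a) := psd_smul_vecMulVec a r hr0
  have hr2 : r ^ 2 * s = t := by
    rw [hr_def, div_pow, Real.sq_sqrt ht0, Real.sq_sqrt hs0, div_mul_cancel₀ _ hs]
  have hsq : (r • vecMulVec a a) ^ 2 = M * Mᴴ := by
    rw [pow_two]
    ext i k
    simp only [Matrix.mul_apply, Matrix.smul_apply, vecMulVec_apply, smul_eq_mul,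
      conjTranspose_apply, star_trivial, hM]
    have l : ∑ j, r * (a i * a j) * (r * (a j * a k)) = r ^ 2 * a i * a k * s := by
      rw [hs_def, Finset.mul_sum]
      exact Finset.sum_congr rfl fun j _ => by ring
    have rr : ∑ j, a i * b j * (a k * b j) = a i * a k * t := by
      rw [ht_def, Finset.mul_sum]
      exact Finset.sum_congr rfl fun j _ => by ring
    rw [l, rr, ← hr2]; ring
  rw [traceNorm_eq_of_sq M _ hS hsq]
  have htr : (r • vecMulVec a a).trace = r * s := by
    simp only [trace, diag_apply, Matrix.smul_apply, vecMulVec_apply, smul_eq_mul, hs_def]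
    rw [Finset.mul_sum]
    exact Finset.sum_congr rfl fun i _ => by ring
  rw [htr, hr_def]
  rw [eq_comm, mul_comm (Real.sqrt s)]
  field_simp
  rw [Real.sq_sqrt hs0]

def swapMat (d : ℕ) : Matrix (Fin d × Fin d) (Fin d × Fin d) ℂ :=
  Matrix.of fun p q => if p.1 = q.2 ∧ p.2 = q.1 then 1 else 0

lemma trace_mul_swap {d : ℕ} (X Y : Matrix (Fin d) (Fin d) ℂ) :
    ((X ⊗ₖ Y) * swapMat d).trace = (X * Y).trace := by
  simp only [trace, diag_apply, mul_apply, swapMat, of_apply, kroneckerMap_apply,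
    Fintype.sum_prod_type, mul_ite, mul_one, mul_zero, ite_and, Finset.sum_ite_irrel,
    Finset.sum_const_zero, Finset.sum_ite_eq, Finset.sum_ite_eq', Finset.mem_univ, if_true]

lemma trace_swap {d : ℕ} : (swapMat d).trace = (d : ℂ) := by
  simp [trace, diag_apply, swapMat, of_apply, Fintype.sum_prod_type, ite_and,
    Finset.sum_ite_eq, Finset.sum_ite_eq', Finset.card_univ]

lemma trace_swap_mul_swap {d : ℕ} : (swapMat d * swapMat d).trace = ((d : ℂ))^2 := by
  simp only [trace, diag_apply, mul_apply, swapMat, of_apply, Fintype.sum_prod_type,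
    ite_and, mul_ite, mul_one, mul_zero, ite_mul, zero_mul, one_mul,
    Finset.sum_ite_eq, Finset.sum_ite_eq', Finset.mem_univ, if_true]
  simp [Finset.sum_ite_eq, pow_two]

lemma swap_conjT {d : ℕ} : (swapMat d)ᴴ = swapMat d := by
  ext p q
  by_cases h1 : p.1 = q.2 <;> by_cases h2 : p.2 = q.1 <;>
    simp [conjTranspose_apply, swapMat, h1, h2, eq_comm]

lemma kron_conjT {d : ℕ} (X Y : Matrix (Fin d) (Fin d) ℂ) :
    (X ⊗ₖ Y)ᴴ = Xᴴ ⊗ₖ Yᴴ := by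
  ext p q
  simp [conjTranspose_apply, kroneckerMap_apply, mul_comm]

lemma trace_vecMulVec_mul {d : ℕ} (a b c e : Fin d → ℂ) :
    (vecMulVec a b * vecMulVec c e).trace = (b ⬝ᵥ c) * (e ⬝ᵥ a) := by
  simp only [trace, diag, mul_apply, vecMulVec_apply, dotProduct, Finset.sum_mul,
    Finset.mul_sum]
  exact Finset.sum_congr rfl fun j _ => Finset.sum_congr rfl fun i _ => by ring

lemma trace_vecMulVec {d : ℕ} (a b : Fin d → ℂ) :
    (vecMulVec a b).trace = a ⬝ᵥ b := by
  simp [trace, diag, vecMulVec_apply, dotProduct]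

lemma eq_zero_of_trace_mul_conjTranspose {n : Type*} [Fintype n]
    (M : Matrix n n ℂ) (h : (M * Mᴴ).trace = 0) : M = 0 := by
  have h2 : (M * Mᴴ).trace = ((∑ i, ∑ j, Complex.normSq (M i j) : ℝ) : ℂ) := by
    simp only [trace, diag, mul_apply, conjTranspose_apply, Complex.star_def,
      Complex.mul_conj]
    push_cast
    rfl
  rw [h2] at h
  have h3 : (∑ i, ∑ j, Complex.normSq (M i j) : ℝ) = 0 := by exact_mod_cast h
  ext i j
  have h4 : ∀ i ∈ Finset.univ, (0:ℝ) ≤ ∑ j, Complex.normSq (M i j) :=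
    fun i _ => Finset.sum_nonneg fun j _ => Complex.normSq_nonneg _
  have h5 := (Finset.sum_eq_zero_iff_of_nonneg h4).mp h3 i (Finset.mem_univ i)
  have h6 := (Finset.sum_eq_zero_iff_of_nonneg (fun j _ => Complex.normSq_nonneg (M i j))).mp h5 j
    (Finset.mem_univ j)
  simpa using Complex.normSq_eq_zero.mp h6

lemma sic_sum_sq {d : ℕ} (hd : 0 < d) (ψ : Fin (d ^ 2) → Fin d → ℂ) (hs : IsSIC d ψ)
    (ρ : Matrix (Fin d) (Fin d) ℂ) :
    ∑ k, ((ρ * vecMulVec (ψ k) (star (ψ k))).trace) ^ 2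
      = (d : ℂ) / ((d : ℂ) + 1) * (ρ.trace ^ 2 + (ρ * ρ).trace) := by
  set P : Fin (d ^ 2) → Matrix (Fin d) (Fin d) ℂ :=
    fun k => vecMulVec (ψ k) (star (ψ k)) with hP_def
  have hd1 : ((d : ℝ) + 1) ≠ 0 := by positivity
  have hd1c : ((d : ℂ) + 1) ≠ 0 := Nat.cast_add_one_ne_zero d
  have hPP : ∀ i j, (P i * P j).trace =
      ((((if i = j then (d : ℝ) else 0) + 1) / ((d : ℝ) + 1) : ℝ) : ℂ) := by
    intro i j
    rw [hP_def, trace_vecMulVec_mul]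
    have hc : star (ψ j) ⬝ᵥ ψ i = starRingEnd ℂ (star (ψ i) ⬝ᵥ ψ j) := by
      simp only [dotProduct, map_sum, _root_.map_mul, Pi.star_apply, Complex.star_def,
        Complex.conj_conj]
      exact Finset.sum_congr rfl fun k _ => by ring
    rw [hc, Complex.mul_conj, ← Complex.sq_norm, hs i j]
  have hPPd : ∀ k, (P k * P k).trace = 1 := by
    intro k
    rw [hPP k k, if_pos rfl, div_self hd1, Complex.ofReal_one]
  have hP1 : ∀ k, (P k).trace = 1 := by
    intro k
    rw [hP_def, _root_.trace_vecMulVec]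
    have h1 : ψ k ⬝ᵥ star (ψ k) = ((∑ i, Complex.normSq (ψ k i) : ℝ) : ℂ) := by
      push_cast
      simp [dotProduct, Complex.star_def, Complex.mul_conj]
    have h3 : star (ψ k) ⬝ᵥ ψ k = ((∑ i, Complex.normSq (ψ k i) : ℝ) : ℂ) := by
      push_cast
      simp only [dotProduct, Pi.star_apply]
      exact Finset.sum_congr rfl fun i _ => by
        simp [Complex.star_def, ← Complex.normSq_eq_conj_mul_self]
    have h2 := hs k k
    rw [if_pos rfl, div_self hd1, h3] at h2
    have habs : ‖((∑ i, Complex.normSq (ψ k i) : ℝ) : ℂ)‖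
        = |(∑ i, Complex.normSq (ψ k i) : ℝ)| := by rw [Complex.norm_real, Real.norm_eq_abs]
    rw [habs] at h2
    have hnn : 0 ≤ (∑ i, Complex.normSq (ψ k i) : ℝ) :=
      Finset.sum_nonneg fun i _ => Complex.normSq_nonneg _
    rw [abs_of_nonneg hnn] at h2
    have : (∑ i, Complex.normSq (ψ k i) : ℝ) = 1 := by nlinarith
    rw [h1, this, Complex.ofReal_one]
  set c : ℂ := (d : ℂ) / ((d : ℂ) + 1) with hc_def
  have hcard : (Finset.univ : Finset (Fin (d ^ 2))).card = d ^ 2 := by simp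
  have hTtr : (∑ k, (P k) ⊗ₖ (P k)).trace = (d : ℂ) ^ 2 := by
    rw [trace_sum]
    simp_rw [trace_kronecker, hP1, mul_one]
    simp
  have hTF : ((∑ k, (P k) ⊗ₖ (P k)) * swapMat d).trace = (d : ℂ) ^ 2 := by
    rw [Finset.sum_mul, trace_sum]
    simp_rw [trace_mul_swap, hPPd]
    simp
  have hFT : (swapMat d * (∑ k, (P k) ⊗ₖ (P k))).trace = (d : ℂ) ^ 2 := by
    rw [trace_mul_comm]; exact hTF
  have hTT : ((∑ k, (P k) ⊗ₖ (P k)) * (∑ k, (P k) ⊗ₖ (P k))).trace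
      = 2 * (d : ℂ) ^ 3 / ((d : ℂ) + 1) := by
    rw [Finset.sum_mul, trace_sum]
    have inner : ∀ j : Fin (d ^ 2), (((P j) ⊗ₖ (P j)) * (∑ k, (P k) ⊗ₖ (P k))).trace
        = ∑ k, ((P j * P k).trace * (P j * P k).trace) := by
      intro j
      rw [Finset.mul_sum, trace_sum]
      exact Finset.sum_congr rfl fun k _ => by rw [← mul_kronecker_mul, trace_kronecker]
    simp_rw [inner, hPP]
    have step : ∀ j k : Fin (d ^ 2),
        (((((if j = k then (d : ℝ) else 0) + 1) / ((d : ℝ) + 1) : ℝ) : ℂ)) *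
          (((((if j = k then (d : ℝ) else 0) + 1) / ((d : ℝ) + 1) : ℝ) : ℂ))
        = (if j = k then (1 - (1 / ((d : ℂ) + 1)) ^ 2) else 0) + (1 / ((d : ℂ) + 1)) ^ 2 := by
      intro j k
      split_ifs with h
      · push_cast
        field_simp
        ring
      · push_cast
        field_simp
        ring
    simp_rw [step, Finset.sum_add_distrib, Finset.sum_ite_eq, Finset.mem_univ, if_true,
      Finset.sum_const, hcard, nsmul_eq_mul]
    push_cast
    field_simp
    ring
  have hPh : ∀ k, (P k)ᴴ = P k := by
    intro k
    ext i j
    simp [hP_def, conjTranspose_apply, vecMulVec_apply, mul_comm]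
  have hTh : (∑ k, (P k) ⊗ₖ (P k))ᴴ = ∑ k, (P k) ⊗ₖ (P k) := by
    rw [Matrix.conjTranspose_sum]
    exact Finset.sum_congr rfl fun k _ => by rw [kron_conjT, hPh]
  have hstarc : star c = c := by
    rw [hc_def]
    simp [star_div₀]
  have hMh : ((∑ k, (P k) ⊗ₖ (P k)) - c • (1 + swapMat d))ᴴ
      = (∑ k, (P k) ⊗ₖ (P k)) - c • (1 + swapMat d) := by
    rw [conjTranspose_sub, hTh, conjTranspose_smul, hstarc, conjTranspose_add,
      conjTranspose_one, swap_conjT]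
  have hMM : (((∑ k, (P k) ⊗ₖ (P k)) - c • (1 + swapMat d)) *
      ((∑ k, (P k) ⊗ₖ (P k)) - c • (1 + swapMat d))ᴴ).trace = 0 := by
    rw [hMh]
    simp only [sub_mul, mul_sub, smul_mul_assoc, mul_smul_comm, smul_smul, add_mul, mul_add,
      mul_one, one_mul, trace_sub, trace_add, trace_smul, smul_eq_mul]
    rw [hTT, hTF, hFT, hTtr, trace_swap, trace_swap_mul_swap, trace_one]
    simp only [Fintype.card_prod, Fintype.card_fin]
    push_cast
    rw [hc_def]
    field_simp
    ring
  have hM0 := eq_zero_of_trace_mul_conjTranspose _ hMM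
  have hT : (∑ k, (P k) ⊗ₖ (P k)) = c • (1 + swapMat d) := sub_eq_zero.mp hM0
  calc ∑ k, ((ρ * P k).trace) ^ 2
      = ∑ k, ((ρ ⊗ₖ ρ) * ((P k) ⊗ₖ (P k))).trace := by
        refine Finset.sum_congr rfl fun k _ => ?_
        rw [← mul_kronecker_mul, trace_kronecker, pow_two]
    _ = ((ρ ⊗ₖ ρ) * (∑ k, (P k) ⊗ₖ (P k))).trace := by rw [Finset.mul_sum, trace_sum]
    _ = c * (((ρ ⊗ₖ ρ)).trace + ((ρ ⊗ₖ ρ) * swapMat d).trace) := by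
        rw [hT, mul_smul_comm, trace_smul, mul_add, mul_one, trace_add, smul_eq_mul]
    _ = c * (ρ.trace ^ 2 + (ρ * ρ).trace) := by
        rw [trace_kronecker, trace_mul_swap, pow_two]

lemma parseval {d : ℕ} (hd : 0 < d) (A : Fin (d ^ 2) → Matrix (Fin d) (Fin d) ℂ)
    (hAon : ∀ i j, (A i * A j).trace = if i = j then 1 else 0)
    (ρ : Matrix (Fin d) (Fin d) ℂ) :
    (ρ * ρ).trace = ∑ i, ((ρ * A i).trace) ^ 2 := by
  have hlin : LinearIndependent ℂ A := by
    rw [Fintype.linearIndependent_iff]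
    intro g hg j
    have := congrArg (fun M => (M * A j).trace) hg
    simp only [Finset.sum_mul, zero_mul, trace_zero, trace_sum, smul_mul_assoc,
      trace_smul, smul_eq_mul] at this
    simp_rw [hAon] at this
    simpa [Finset.sum_ite_eq', Finset.mem_univ] using this
  haveI : Nonempty (Fin (d ^ 2)) := ⟨⟨0, by positivity⟩⟩
  have hcard : Fintype.card (Fin (d ^ 2)) = Module.finrank ℂ (Matrix (Fin d) (Fin d) ℂ) := by
    simp [Module.finrank_matrix, pow_two]
  have hspan := hlin.span_eq_top_of_card_eq_finrank hcard
  have hmem : ρ ∈ Submodule.span ℂ (Set.range A) := by rw [hspan]; trivial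
  obtain ⟨x, hx⟩ := (Submodule.mem_span_range_iff_exists_fun ℂ).mp hmem
  have hcoef : ∀ j, (ρ * A j).trace = x j := by
    intro j
    rw [← hx, Finset.sum_mul, trace_sum]
    simp_rw [smul_mul_assoc, trace_smul, hAon, smul_eq_mul, mul_ite, mul_one, mul_zero]
    simp [Finset.sum_ite_eq', Finset.mem_univ]
  have hrr : (ρ * ρ).trace = ∑ i, x i ^ 2 := by
    conv_lhs => rw [← hx]
    rw [Finset.sum_mul, trace_sum]
    have : ∀ i, ((x i • A i) * ∑ j, x j • A j).trace = x i ^ 2 := by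
      intro i
      rw [Finset.mul_sum, trace_sum]
      simp_rw [smul_mul_assoc, mul_smul_comm, trace_smul, hAon, smul_eq_mul]
      simp [Finset.sum_ite_eq', Finset.mem_univ, pow_two]
    simp_rw [this]
  rw [hrr]
  exact Finset.sum_congr rfl fun i _ => by rw [hcoef]

lemma trace_mul_real {d : ℕ} (ρ M : Matrix (Fin d) (Fin d) ℂ)
    (hρ : ρ.IsHermitian) (hM : M.IsHermitian) :
    (ρ * M).trace = (((ρ * M).trace.re : ℝ) : ℂ) := by
  have h : star ((ρ * M).trace) = (ρ * M).trace := by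
    rw [← trace_conjTranspose, conjTranspose_mul, hρ.eq, hM.eq, trace_mul_comm]
  exact (Complex.conj_eq_iff_re.mp h).symm

lemma trace_sq_bounds {d : ℕ} (ρ : Matrix (Fin d) (Fin d) ℂ) (h : ρ.PosSemidef)
    (ht : ρ.trace = 1) : 0 ≤ (ρ * ρ).trace.re ∧ (ρ * ρ).trace.re ≤ 1 := by
  have hsp := h.1.spectral_theorem
  rw [Unitary.conjStarAlgAut_apply] at hsp
  set U := (h.1.eigenvectorUnitary : Matrix (Fin d) (Fin d) ℂ) with hU_def
  have hU : U * star U = 1 := (Matrix.mem_unitaryGroup_iff).mp h.1.eigenvectorUnitary.2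
  have hU' : star U * U = 1 := (Matrix.mem_unitaryGroup_iff').mp h.1.eigenvectorUnitary.2
  have key : ∀ E : Matrix (Fin d) (Fin d) ℂ, (U * E * star U).trace = E.trace := by
    intro E
    rw [trace_mul_cycle, hU', one_mul]
  set lam := h.1.eigenvalues with hlam_def
  have hρρ : ρ * ρ = U * (diagonal (RCLike.ofReal ∘ lam) * diagonal (RCLike.ofReal ∘ lam))
      * star U := by
    conv_lhs => rw [hsp]
    simp only [Matrix.mul_assoc]
    rw [← Matrix.mul_assoc (star U) U, hU', one_mul]
  have htr2 : (ρ * ρ).trace = ((∑ i, lam i ^ 2 : ℝ) : ℂ) := by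
    rw [hρρ, key, diagonal_mul_diagonal, trace_diagonal]
    push_cast
    exact Finset.sum_congr rfl fun i _ => by simp [pow_two]
  have htr1 : (∑ i, lam i : ℝ) = 1 := by
    have : ρ.trace = ((∑ i, lam i : ℝ) : ℂ) := by
      conv_lhs => rw [hsp]
      rw [key, trace_diagonal]
      push_cast
      rfl
    rw [ht] at this
    exact_mod_cast this.symm
  have hnn : ∀ i ∈ Finset.univ, 0 ≤ lam i := fun i _ => h.eigenvalues_nonneg i
  have h1 : (ρ * ρ).trace.re = ∑ i, lam i ^ 2 := by rw [htr2, Complex.ofReal_re]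
  constructor
  · rw [h1]; exact Finset.sum_nonneg fun i _ => sq_nonneg _
  · rw [h1, ← one_pow 2, ← htr1]
    exact Finset.sum_sq_le_sq_sum_of_nonneg hnn

lemma sic_smul_herm {d : ℕ} (r : ℝ) (ψ : Fin (d ^ 2) → Fin d → ℂ) (k : Fin (d ^ 2)) :
    ((r : ℂ) • sicProj d ψ k).IsHermitian := by
  ext i j
  simp only [sicProj, conjTranspose_apply, Matrix.smul_apply, vecMulVec_apply, smul_eq_mul,
    Pi.star_apply, Complex.star_def, _root_.map_mul, map_inv₀, Complex.conj_conj,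
    Complex.conj_ofReal, Complex.conj_natCast]
  ring

end Aux

theorem ccnr_le_esic_product_state (dA dB : ℕ) (hdA : 0 < dA) (hdB : 0 < dB)
    (ρA : Matrix (Fin dA) (Fin dA) ℂ) (hρA : ρA.PosSemidef) (htrA : ρA.trace = 1)
    (ρB : Matrix (Fin dB) (Fin dB) ℂ) (hρB : ρB.PosSemidef) (htrB : ρB.trace = 1)
    (A : Fin (dA ^ 2) → Matrix (Fin dA) (Fin dA) ℂ)
    (hAh : ∀ i, (A i).IsHermitian)
    (hAon : ∀ i j, (A i * A j).trace = if i = j then 1 else 0)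
    (B : Fin (dB ^ 2) → Matrix (Fin dB) (Fin dB) ℂ)
    (hBh : ∀ j, (B j).IsHermitian)
    (hBon : ∀ i j, (B i * B j).trace = if i = j then 1 else 0)
    (ψA : Fin (dA ^ 2) → Fin dA → ℂ) (hsicA : IsSIC dA ψA)
    (ψB : Fin (dB ^ 2) → Fin dB → ℂ) (hsicB : IsSIC dB ψB)
    (EA : Fin (dA ^ 2) → Matrix (Fin dA) (Fin dA) ℂ)
    (hEA : ∀ j, EA j = (Real.sqrt ((dA : ℝ) * ((dA : ℝ) + 1) / 2) : ℂ) • sicProj dA ψA j)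
    (EB : Fin (dB ^ 2) → Matrix (Fin dB) (Fin dB) ℂ)
    (hEB : ∀ k, EB k = (Real.sqrt ((dB : ℝ) * ((dB : ℝ) + 1) / 2) : ℂ) • sicProj dB ψB k)
    (C : Matrix (Fin (dA ^ 2)) (Fin (dB ^ 2)) ℝ)
    (hC : ∀ i j, C i j = (((ρA ⊗ₖ ρB) * (A i ⊗ₖ B j)).trace).re)
    (P : Matrix (Fin (dA ^ 2)) (Fin (dB ^ 2)) ℝ)
    (hP : ∀ i j, P i j = (((ρA ⊗ₖ ρB) * (EA i ⊗ₖ EB j)).trace).re) :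
    traceNorm C = Real.sqrt ((ρA * ρA).trace.re * (ρB * ρB).trace.re) ∧
      traceNorm P = Real.sqrt ((1 + (ρA * ρA).trace.re) * (1 + (ρB * ρB).trace.re)) / 2 ∧
      traceNorm C ≤ traceNorm P := by
  have hdA1 : ((dA : ℂ) + 1) ≠ 0 := Nat.cast_add_one_ne_zero dA
  have hdB1 : ((dB : ℂ) + 1) ≠ 0 := Nat.cast_add_one_ne_zero dB
  have hdAc : (dA : ℂ) ≠ 0 := Nat.cast_ne_zero.mpr hdA.ne'
  have hdBc : (dB : ℂ) ≠ 0 := Nat.cast_ne_zero.mpr hdB.ne'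
  set x := (ρA * ρA).trace.re with hx_def
  set y := (ρB * ρB).trace.re with hy_def
  obtain ⟨hx0, hx1⟩ := trace_sq_bounds ρA hρA htrA
  obtain ⟨hy0, hy1⟩ := trace_sq_bounds ρB hρB htrB
  have hxC : (ρA * ρA).trace = (x : ℂ) := trace_mul_real ρA ρA hρA.1 hρA.1
  have hyC : (ρB * ρB).trace = (y : ℂ) := trace_mul_real ρB ρB hρB.1 hρB.1
  -- Part 1 : the CCNR matrix
  set a : Fin (dA ^ 2) → ℝ := fun i => (ρA * A i).trace.re with ha_def
  set b : Fin (dB ^ 2) → ℝ := fun j => (ρB * B j).trace.re with hb_def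
  have haC : ∀ i, (ρA * A i).trace = ((a i : ℝ) : ℂ) := fun i =>
    trace_mul_real ρA (A i) hρA.1 (hAh i)
  have hbC : ∀ j, (ρB * B j).trace = ((b j : ℝ) : ℂ) := fun j =>
    trace_mul_real ρB (B j) hρB.1 (hBh j)
  have hCab : ∀ i j, C i j = a i * b j := by
    intro i j
    rw [hC i j, ← mul_kronecker_mul, trace_kronecker, haC, hbC, ← Complex.ofReal_mul,
      Complex.ofReal_re]
  have hsa : ∑ i, a i ^ 2 = x := by
    have hp := parseval hdA A hAon ρA
    rw [hxC] at hp
    have h2 : ∑ i, ((ρA * A i).trace) ^ 2 = ((∑ i, a i ^ 2 : ℝ) : ℂ) := by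
      push_cast
      exact Finset.sum_congr rfl fun i _ => by rw [haC]
    rw [h2] at hp
    exact_mod_cast hp.symm
  have hsb : ∑ j, b j ^ 2 = y := by
    have hp := parseval hdB B hBon ρB
    rw [hyC] at hp
    have h2 : ∑ j, ((ρB * B j).trace) ^ 2 = ((∑ j, b j ^ 2 : ℝ) : ℂ) := by
      push_cast
      exact Finset.sum_congr rfl fun j _ => by rw [hbC]
    rw [h2] at hp
    exact_mod_cast hp.symm
  have hTC : traceNorm C = Real.sqrt (x * y) := by
    rw [traceNorm_rankOne a b C hCab, hsa, hsb, ← Real.sqrt_mul hx0]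
  -- Part 2 : the ESIC matrix
  set rA := Real.sqrt ((dA : ℝ) * ((dA : ℝ) + 1) / 2) with hrA_def
  set rB := Real.sqrt ((dB : ℝ) * ((dB : ℝ) + 1) / 2) with hrB_def
  have hrA2 : rA ^ 2 = (dA : ℝ) * ((dA : ℝ) + 1) / 2 := Real.sq_sqrt (by positivity)
  have hrB2 : rB ^ 2 = (dB : ℝ) * ((dB : ℝ) + 1) / 2 := Real.sq_sqrt (by positivity)
  have hEAh : ∀ i, (EA i).IsHermitian := fun i => by
    rw [hEA i]; exact sic_smul_herm rA ψA i
  have hEBh : ∀ j, (EB j).IsHermitian := fun j => by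
    rw [hEB j]; exact sic_smul_herm rB ψB j
  set α : Fin (dA ^ 2) → ℝ := fun i => (ρA * EA i).trace.re with hα_def
  set β : Fin (dB ^ 2) → ℝ := fun j => (ρB * EB j).trace.re with hβ_def
  have hαC : ∀ i, (ρA * EA i).trace = ((α i : ℝ) : ℂ) := fun i =>
    trace_mul_real ρA (EA i) hρA.1 (hEAh i)
  have hβC : ∀ j, (ρB * EB j).trace = ((β j : ℝ) : ℂ) := fun j =>
    trace_mul_real ρB (EB j) hρB.1 (hEBh j)
  have hPab : ∀ i j, P i j = α i * β j := by
    intro i j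
    rw [hP i j, ← mul_kronecker_mul, trace_kronecker, hαC, hβC, ← Complex.ofReal_mul,
      Complex.ofReal_re]
  have hEAtr : ∀ i, (ρA * EA i).trace
      = (rA : ℂ) * (dA : ℂ)⁻¹ * (ρA * vecMulVec (ψA i) (star (ψA i))).trace := by
    intro i
    rw [hEA i]
    simp only [sicProj, mul_smul_comm, trace_smul, smul_eq_mul]
    ring
  have hEBtr : ∀ j, (ρB * EB j).trace
      = (rB : ℂ) * (dB : ℂ)⁻¹ * (ρB * vecMulVec (ψB j) (star (ψB j))).trace := by
    intro j
    rw [hEB j]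
    simp only [sicProj, mul_smul_comm, trace_smul, smul_eq_mul]
    ring
  have hsumA : ∑ i, ((ρA * EA i).trace) ^ 2 = ((1 : ℂ) + (x : ℂ)) / 2 := by
    simp_rw [hEAtr, mul_pow]
    rw [← Finset.mul_sum, sic_sum_sq hdA ψA hsicA ρA, htrA, hxC]
    have hc2 : ((rA : ℂ)) ^ 2 = (((dA : ℝ) * ((dA : ℝ) + 1) / 2 : ℝ) : ℂ) := by
      rw [← Complex.ofReal_pow, hrA2]
    rw [hc2]
    push_cast
    field_simp
  have hsumB : ∑ j, ((ρB * EB j).trace) ^ 2 = ((1 : ℂ) + (y : ℂ)) / 2 := by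
    simp_rw [hEBtr, mul_pow]
    rw [← Finset.mul_sum, sic_sum_sq hdB ψB hsicB ρB, htrB, hyC]
    have hc2 : ((rB : ℂ)) ^ 2 = (((dB : ℝ) * ((dB : ℝ) + 1) / 2 : ℝ) : ℂ) := by
      rw [← Complex.ofReal_pow, hrB2]
    rw [hc2]
    push_cast
    field_simp
  have hsα : ∑ i, α i ^ 2 = (1 + x) / 2 := by
    have h2 : ∑ i, ((ρA * EA i).trace) ^ 2 = ((∑ i, α i ^ 2 : ℝ) : ℂ) := by
      push_cast
      exact Finset.sum_congr rfl fun i _ => by rw [hαC]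
    rw [h2] at hsumA
    have : ((∑ i, α i ^ 2 : ℝ) : ℂ) = (((1 + x) / 2 : ℝ) : ℂ) := by
      rw [hsumA]; push_cast; ring
    exact_mod_cast this
  have hsβ : ∑ j, β j ^ 2 = (1 + y) / 2 := by
    have h2 : ∑ j, ((ρB * EB j).trace) ^ 2 = ((∑ j, β j ^ 2 : ℝ) : ℂ) := by
      push_cast
      exact Finset.sum_congr rfl fun j _ => by rw [hβC]
    rw [h2] at hsumB
    have : ((∑ j, β j ^ 2 : ℝ) : ℂ) = (((1 + y) / 2 : ℝ) : ℂ) := by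
      rw [hsumB]; push_cast; ring
    exact_mod_cast this
  have hxy1 : (0 : ℝ) ≤ (1 + x) * (1 + y) := by nlinarith
  have hTP : traceNorm P = Real.sqrt ((1 + x) * (1 + y)) / 2 := by
    rw [traceNorm_rankOne α β P hPab, hsα, hsβ, ← Real.sqrt_mul (by positivity)]
    rw [show (1 + x) / 2 * ((1 + y) / 2) = ((1 + x) * (1 + y)) * (1 / 2) ^ 2 by ring]
    rw [Real.sqrt_mul hxy1, Real.sqrt_sq (by norm_num : (0:ℝ) ≤ 1 / 2)]
    ring
  refine ⟨hTC, hTP, ?_⟩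
  rw [hTC, hTP]
  have hle : x * y ≤ (1 + x) * (1 + y) * (1 / 2) ^ 2 := by nlinarith
  calc Real.sqrt (x * y) ≤ Real.sqrt ((1 + x) * (1 + y) * (1 / 2) ^ 2) :=
        Real.sqrt_le_sqrt hle
    _ = Real.sqrt ((1 + x) * (1 + y)) / 2 := by
        rw [Real.sqrt_mul hxy1, Real.sqrt_sq (by norm_num : (0:ℝ) ≤ 1 / 2)]
        ring
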